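/- Let G be a graph with adjacency matrix A on n vertices and k ≤ n, and suppose μ/2 > k − 1. If x* minimizes (1/2)xᵀAx over {x ∈ {0,1}ⁿ : eᵀx = k}, then (1/2)x*ᵀAx* < (1/2)xᵀAx + (μ/2)(eᵀx − k)² for every x ∈ {0,1}ⁿ with eᵀx ≠ k. Consequently, every minimizer of (1/2)xᵀAx + (μ/2)(eᵀx − k)² over {0,1}ⁿ has cardinality exactly k and is a minimizer of (1/2)xᵀAx among binary vectors of cardinality k. -/

import Mathlib

open Matrix BigOperators Finset

def indVec {n : ℕ} (S : Finset (Fin n)) : Fin n → ℝ := fun i => if i ∈ S then 1 else 0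

lemma ind_binary {n : ℕ} (S : Finset (Fin n)) : ∀ i, indVec S i = 0 ∨ indVec S i = 1 := by
  intro i; unfold indVec; split <;> simp

lemma ind_sum {n : ℕ} (S : Finset (Fin n)) : (∑ i, indVec S i) = (S.card : ℝ) := by
  simp [indVec]

lemma quad_eq {n : ℕ} (A : Matrix (Fin n) (Fin n) ℝ) (S : Finset (Fin n)) :
    indVec S ⬝ᵥ A.mulVec (indVec S) = ∑ i ∈ S, ∑ j ∈ S, A i j := by
  simp [indVec, dotProduct, mulVec, ite_mul, mul_ite, Finset.sum_ite_mem,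
    Finset.univ_inter]

lemma binary_eq_ind {n : ℕ} (x : Fin n → ℝ) (hx : ∀ i, x i = 0 ∨ x i = 1) :
    x = indVec (Finset.univ.filter (fun i => x i = 1)) := by
  funext i
  rcases hx i with h | h <;> simp [indVec, h]

-- row sum bound
lemma row_bound {n : ℕ} (A : Matrix (Fin n) (Fin n) ℝ)
    (h01 : ∀ i j, A i j = 0 ∨ A i j = 1) (hdiag : ∀ i, A i i = 0)
    (T : Finset (Fin n)) (i : Fin n) (hi : i ∈ T) :
    ∑ j ∈ T, A i j ≤ (T.card : ℝ) - 1 := by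
  have h1 : ∑ j ∈ T, A i j = ∑ j ∈ T.erase i, A i j := by
    rw [Finset.sum_erase _ (hdiag i)]
  rw [h1]
  have h2 : ∑ j ∈ T.erase i, A i j ≤ ∑ j ∈ T.erase i, (1:ℝ) := by
    apply Finset.sum_le_sum
    intro j _
    rcases h01 i j with h | h <;> simp [h]
  have h3 : ((T.erase i).card : ℝ) = (T.card : ℝ) - 1 := by
    rw [Finset.card_erase_of_mem hi]
    have := Finset.card_pos.mpr ⟨i, hi⟩
    push_cast [Nat.cast_sub (by omega : 1 ≤ T.card)]
    ring
  calc _ ≤ ∑ j ∈ T.erase i, (1:ℝ) := h2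
    _ = ((T.erase i).card : ℝ) := by simp
    _ = _ := h3

lemma quad_mono {n : ℕ} (A : Matrix (Fin n) (Fin n) ℝ)
    (h01 : ∀ i j, A i j = 0 ∨ A i j = 1)
    {S T : Finset (Fin n)} (hST : S ⊆ T) :
    ∑ i ∈ S, ∑ j ∈ S, A i j ≤ ∑ i ∈ T, ∑ j ∈ T, A i j := by
  have hnn : ∀ i j, 0 ≤ A i j := fun i j => by rcases h01 i j with h | h <;> simp [h]
  apply Finset.sum_le_sum_of_subset_of_nonneg hST ?_ |>.trans' ?_
  · intro i _ _; exact Finset.sum_nonneg fun j _ => hnn i j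
  · apply Finset.sum_le_sum
    intro i _
    exact Finset.sum_le_sum_of_subset_of_nonneg hST (fun j _ _ => hnn i j)

theorem stmt_5 {n : ℕ} (A : Matrix (Fin n) (Fin n) ℝ)
    (hsymm : A.IsSymm) (h01 : ∀ i j, A i j = 0 ∨ A i j = 1) (hdiag : ∀ i, A i i = 0)
    (k : ℕ) (hk1 : 1 ≤ k) (hk : k ≤ n) (μ : ℝ) (hμ : μ / 2 > (k : ℝ) - 1)
    (xstar : Fin n → ℝ) (hxstar : ∀ i, xstar i = 0 ∨ xstar i = 1)
    (hxstarcard : (∑ i, xstar i) = (k : ℝ))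
    (hxstaropt : ∀ x : Fin n → ℝ, (∀ i, x i = 0 ∨ x i = 1) → (∑ i, x i) = (k : ℝ) →
      (1 / 2) * (xstar ⬝ᵥ A.mulVec xstar) ≤ (1 / 2) * (x ⬝ᵥ A.mulVec x)) :
    (∀ x : Fin n → ℝ, (∀ i, x i = 0 ∨ x i = 1) → (∑ i, x i) ≠ (k : ℝ) →
      (1 / 2) * (xstar ⬝ᵥ A.mulVec xstar) <
        (1 / 2) * (x ⬝ᵥ A.mulVec x) + μ / 2 * ((∑ i, x i) - k) ^ 2) ∧
    (∀ y : Fin n → ℝ, (∀ i, y i = 0 ∨ y i = 1) →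
      (∀ x : Fin n → ℝ, (∀ i, x i = 0 ∨ x i = 1) →
        (1 / 2) * (y ⬝ᵥ A.mulVec y) + μ / 2 * ((∑ i, y i) - k) ^ 2 ≤
          (1 / 2) * (x ⬝ᵥ A.mulVec x) + μ / 2 * ((∑ i, x i) - k) ^ 2) →
      (∑ i, y i) = (k : ℝ) ∧
        ∀ x : Fin n → ℝ, (∀ i, x i = 0 ∨ x i = 1) → (∑ i, x i) = (k : ℝ) →
          (1 / 2) * (y ⬝ᵥ A.mulVec y) ≤ (1 / 2) * (x ⬝ᵥ A.mulVec x)) := by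
  have hnn : ∀ i j, 0 ≤ A i j := fun i j => by rcases h01 i j with h | h <;> simp [h]
  have hk1' : (1:ℝ) ≤ (k:ℝ) := by exact_mod_cast hk1
  have hμpos : 0 < μ / 2 := lt_of_le_of_lt (by linarith : (0:ℝ) ≤ (k:ℝ) - 1) hμ
  have part1 : ∀ x : Fin n → ℝ, (∀ i, x i = 0 ∨ x i = 1) → (∑ i, x i) ≠ (k : ℝ) →
      (1 / 2) * (xstar ⬝ᵥ A.mulVec xstar) <
        (1 / 2) * (x ⬝ᵥ A.mulVec x) + μ / 2 * ((∑ i, x i) - k) ^ 2 := by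
    intro x hx hsum
    set S := Finset.univ.filter (fun i => x i = 1) with hS
    have hxind : x = indVec S := binary_eq_ind x hx
    have hsumS : (∑ i, x i) = (S.card : ℝ) := by rw [hxind, ind_sum]
    have hqx : x ⬝ᵥ A.mulVec x = ∑ i ∈ S, ∑ j ∈ S, A i j := by rw [hxind, quad_eq]
    set ℓ := S.card with hℓ
    have hℓk : ℓ ≠ k := by
      intro h; apply hsum; rw [hsumS, h]
    rcases lt_or_gt_of_ne hℓk with hlt | hgt
    · -- ℓ < k : extend S to a k-set T
      obtain ⟨T, hST, _, hTcard⟩ := Finset.exists_subsuperset_card_eq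
        (Finset.subset_univ S) (le_of_lt hlt) (by simpa using hk)
      have hstar : (1 / 2) * (xstar ⬝ᵥ A.mulVec xstar) ≤
          (1 / 2) * (∑ i ∈ T, ∑ j ∈ T, A i j) := by
        have := hxstaropt (indVec T) (ind_binary T) (by rw [ind_sum, hTcard])
        rwa [quad_eq] at this
      set D := T \ S with hD
      have hDcard : D.card = k - ℓ := by rw [hD, Finset.card_sdiff_of_subset hST, hTcard]
      have hsplit : ∑ i ∈ T, ∑ j ∈ T, A i j =
          (∑ i ∈ S, ∑ j ∈ S, A i j) + (∑ i ∈ S, ∑ j ∈ D, A i j)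
            + (∑ i ∈ D, ∑ j ∈ T, A i j) := by
        have hTU : T = S ∪ D := by rw [hD, Finset.union_sdiff_of_subset hST]
        have hdisj : Disjoint S D := Finset.disjoint_sdiff
        calc ∑ i ∈ T, ∑ j ∈ T, A i j
            = ∑ i ∈ S, ∑ j ∈ T, A i j + ∑ i ∈ D, ∑ j ∈ T, A i j := by
              rw [hTU, Finset.sum_union hdisj]
          _ = _ := by
              congr 1
              rw [← Finset.sum_add_distrib]
              apply Finset.sum_congr rfl
              intro i _
              rw [hTU, Finset.sum_union hdisj]
      have hsym2 : ∑ i ∈ S, ∑ j ∈ D, A i j ≤ ∑ i ∈ D, ∑ j ∈ T, A i j := by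
        rw [Finset.sum_comm (f := fun i j => A i j)]
        apply Finset.sum_le_sum
        intro i _
        calc ∑ j ∈ S, A j i = ∑ j ∈ S, A i j := by
              apply Finset.sum_congr rfl
              intro j _
              exact (Matrix.IsSymm.apply hsymm j i).symm
          _ ≤ ∑ j ∈ T, A i j :=
              Finset.sum_le_sum_of_subset_of_nonneg hST (fun j _ _ => hnn i j)
      have hrow : ∑ i ∈ D, ∑ j ∈ T, A i j ≤ (D.card : ℝ) * ((k:ℝ) - 1) := by
        calc ∑ i ∈ D, ∑ j ∈ T, A i j ≤ ∑ i ∈ D, ((k:ℝ) - 1) := by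
              apply Finset.sum_le_sum
              intro i hi
              have : i ∈ T := (Finset.sdiff_subset) hi
              have := row_bound A h01 hdiag T i this
              rwa [hTcard] at this
          _ = (D.card : ℝ) * ((k:ℝ) - 1) := by
              rw [Finset.sum_const, nsmul_eq_mul]
      have hQT : ∑ i ∈ T, ∑ j ∈ T, A i j ≤
          (∑ i ∈ S, ∑ j ∈ S, A i j) + 2 * ((D.card : ℝ) * ((k:ℝ) - 1)) := by
        rw [hsplit]; nlinarith [hsym2, hrow]
      -- numerical finish
      have hcast : ((k - ℓ : ℕ) : ℝ) = (k:ℝ) - (ℓ:ℝ) := by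
        push_cast [Nat.cast_sub (le_of_lt hlt)]; ring
      have hDd : (D.card : ℝ) = (k:ℝ) - (ℓ:ℝ) := by rw [hDcard, hcast]
      have hdr : (1:ℝ) ≤ (k:ℝ) - (ℓ:ℝ) := by
        rw [← hcast]; exact_mod_cast (by omega : 1 ≤ k - ℓ)
      rw [hsumS]
      rw [hDd] at hQT
      have key1 : 0 < (μ / 2 - ((k:ℝ) - 1)) * ((k:ℝ) - (ℓ:ℝ)) :=
        mul_pos (by linarith) (by linarith)
      have key2 : 0 ≤ μ / 2 * (((k:ℝ) - (ℓ:ℝ)) * (((k:ℝ) - (ℓ:ℝ)) - 1)) :=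
        mul_nonneg (le_of_lt hμpos) (mul_nonneg (by linarith) (by linarith))
      nlinarith [hstar, hQT, hqx]
    · -- ℓ > k : choose a k-subset T of S
      obtain ⟨T, hTS, hTcard⟩ := Finset.exists_subset_card_eq (le_of_lt hgt)
      have hstar : (1 / 2) * (xstar ⬝ᵥ A.mulVec xstar) ≤
          (1 / 2) * (∑ i ∈ T, ∑ j ∈ T, A i j) := by
        have := hxstaropt (indVec T) (ind_binary T) (by rw [ind_sum, hTcard])
        rwa [quad_eq] at this
      have hmono := quad_mono A h01 hTS
      have hpen : 0 < μ / 2 * ((∑ i, x i) - k) ^ 2 := by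
        apply mul_pos hμpos
        have : (∑ i, x i) - k ≠ 0 := sub_ne_zero.mpr hsum
        positivity
      rw [hqx]
      nlinarith
  refine ⟨part1, ?_⟩
  intro y hy hopt
  have h1 := hopt xstar hxstar
  rw [hxstarcard, sub_self] at h1
  norm_num at h1
  have hycard : (∑ i, y i) = (k : ℝ) := by
    by_contra h
    have := part1 y hy h
    linarith
  refine ⟨hycard, ?_⟩
  intro x hx hxsum
  have h2 := hopt x hx
  rw [hycard, hxsum, sub_self] at h2
  norm_num at h2
  linarith
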